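/- Let k ≥ 2, let φ = e^{2πi/k} be a primitive k-th root of unity, and let A be the k×k complex matrix with entries A_{jl} = φ^{jl} for 0 ≤ j, l ≤ k−1. Then there exists an orthonormal basis of ℂ^k consisting of eigenvectors of A all of whose coordinates are real. -/

import Mathlib

open Matrix Module.End Submodule

set_option maxHeartbeats 1000000


/-- The DFT matrix `A` with `A j l = φ^(jl)`, `φ = e^{2πi/k}`, admits an orthonormal basis
of `ℂ^k` consisting of eigenvectors all of whose coordinates are real. Orthonormality and
spanning are stated explicitly with respect to the standard Hermitian inner product. -/
theorem stmt_18 {k : ℕ} (hk : 2 ≤ k)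
    (φ : ℂ) (hφ : φ = Complex.exp (2 * Real.pi * Complex.I / k))
    (A : Matrix (Fin k) (Fin k) ℂ)
    (hA : ∀ j l : Fin k, A j l = φ ^ ((j : ℕ) * (l : ℕ))) :
    ∃ v : Fin k → (Fin k → ℂ),
      Submodule.span ℂ (Set.range v) = ⊤ ∧
      (∀ i j : Fin k, ∑ l, (starRingEnd ℂ) (v i l) * v j l = if i = j then 1 else 0) ∧
      (∀ i, ∃ μ : ℂ, A.mulVec (v i) = μ • v i) ∧
      (∀ i l, (v i l).im = 0) := by
  classical
  have hk0 : (k : ℕ) ≠ 0 := by omega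
  have hprim : IsPrimitiveRoot φ k := hφ ▸ Complex.isPrimitiveRoot_exp k hk0
  have hφ0 : φ ≠ 0 := hprim.ne_zero hk0
  have hconj : (starRingEnd ℂ) φ = φ⁻¹ := by
    rw [hφ, ← Complex.exp_conj, ← Complex.exp_neg]
    congr 1
    simp only [map_div₀, _root_.map_mul, Complex.conj_I, Complex.conj_ofReal, map_ofNat,
      Complex.conj_natCast]
    ring
  have hsum : ∀ j m : Fin k,
      (∑ l, A j l * (starRingEnd ℂ) (A l m)) = if j = m then (k : ℂ) else 0 := by
    intro j m
    set z : ℂ := φ ^ (j : ℕ) * (φ ^ (m : ℕ))⁻¹ with hz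
    have hterm : ∀ l : Fin k, A j l * (starRingEnd ℂ) (A l m) = z ^ (l : ℕ) := by
      intro l
      rw [hA, hA, map_pow, hconj, hz, mul_pow, pow_mul, ← inv_pow φ, ← pow_mul,
        mul_comm (l:ℕ) (m:ℕ), pow_mul φ⁻¹]
    rw [Finset.sum_congr rfl fun l _ => hterm l]
    rw [Fin.sum_univ_eq_sum_range (fun n => z ^ n) k]
    by_cases hjm : j = m
    · subst hjm
      simp [hz, mul_inv_cancel₀ (pow_ne_zero _ hφ0)]
    · rw [if_neg hjm]
      have hzne : z ≠ 1 := by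
        intro h
        rw [hz, mul_inv_eq_one₀ (pow_ne_zero _ hφ0)] at h
        exact hjm (Fin.ext (hprim.pow_inj j.isLt m.isLt h))
      have hzk : z ^ k = 1 := by
        rw [hz, mul_pow, ← pow_mul, mul_comm (j:ℕ) k, pow_mul, hprim.pow_eq_one,
          inv_pow, ← pow_mul, mul_comm (m:ℕ) k, pow_mul, hprim.pow_eq_one]
        simp
      rw [geom_sum_eq hzne, hzk]
      simp
  have hsymmA : ∀ j l : Fin k, A j l = A l j := fun j l => by
    rw [hA, hA, mul_comm]
  -- real and imaginary parts
  set M : Matrix (Fin k) (Fin k) ℝ := A.map Complex.re with hM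
  set N : Matrix (Fin k) (Fin k) ℝ := A.map Complex.im with hN
  have hMN : M * N = N * M := by
    ext j m
    have him := congrArg Complex.im (hsum j m)
    simp only [Complex.im_sum, Complex.mul_im, Complex.conj_re, Complex.conj_im,
      apply_ite Complex.im, Complex.natCast_im, Complex.zero_im, ite_self] at him
    have him' : ∑ l, ((A j l).re * (-(A l m).im) + (A j l).im * (A l m).re) = 0 := him
    rw [Finset.sum_add_distrib] at him'
    simp only [Matrix.mul_apply, hM, hN, Matrix.map_apply]
    have h1 : ∑ l, (A j l).re * (-(A l m).im) = -∑ l, (A j l).re * (A l m).im := by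
      rw [← Finset.sum_neg_distrib]
      exact Finset.sum_congr rfl fun l _ => by ring
    rw [h1] at him'
    linarith [him']
  have hMH : M.IsHermitian := by
    show Mᴴ = M
    ext j l
    simp only [Matrix.conjTranspose_apply, hM, Matrix.map_apply, star_trivial]
    rw [hsymmA l j]
  have hNH : N.IsHermitian := by
    show Nᴴ = N
    ext j l
    simp only [Matrix.conjTranspose_apply, hN, Matrix.map_apply, star_trivial]
    rw [hsymmA l j]
  set X : EuclideanSpace ℝ (Fin k) →ₗ[ℝ] EuclideanSpace ℝ (Fin k) := Matrix.toEuclideanLin M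
  set Y : EuclideanSpace ℝ (Fin k) →ₗ[ℝ] EuclideanSpace ℝ (Fin k) := Matrix.toEuclideanLin N
  have hXs : X.IsSymmetric := Matrix.isHermitian_iff_isSymmetric.1 hMH
  have hYs : Y.IsSymmetric := Matrix.isHermitian_iff_isSymmetric.1 hNH
  have hmulEL : ∀ (P Q : Matrix (Fin k) (Fin k) ℝ),
      Matrix.toEuclideanLin (P * Q) = Matrix.toEuclideanLin P ∘ₗ Matrix.toEuclideanLin Q := by
    intro P Q
    rw [Matrix.toEuclideanLin_eq_toLin]
    exact Matrix.toLin_mul (PiLp.basisFun 2 ℝ (Fin k)) (PiLp.basisFun 2 ℝ (Fin k))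
      (PiLp.basisFun 2 ℝ (Fin k)) P Q
  have hcomm : Commute X Y := by
    show X * Y = Y * X
    rw [Module.End.mul_eq_comp, Module.End.mul_eq_comp, ← hmulEL, ← hmulEL, hMN]
  -- joint eigenspace decomposition
  set V : ℝ × ℝ → Submodule ℝ (EuclideanSpace ℝ (Fin k)) :=
    fun μ => eigenspace X μ.2 ⊓ eigenspace Y μ.1 with hV
  have hOrth := LinearMap.IsSymmetric.orthogonalFamily_eigenspace_inf_eigenspace hXs hYs
  have htop : ⨆ μ : ℝ × ℝ, V μ = ⊤ := by
    rw [iSup_prod]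
    rw [iSup_comm]
    exact LinearMap.IsSymmetric.iSup_iSup_eigenspace_inf_eigenspace_eq_top_of_commute hXs hYs hcomm
  have hInd : iSupIndep V := hOrth.independent
  have : Fintype {μ : ℝ × ℝ // V μ ≠ ⊥} := hInd.fintypeNeBotOfFiniteDimensional
  set W : {μ : ℝ × ℝ // V μ ≠ ⊥} → Submodule ℝ (EuclideanSpace ℝ (Fin k)) :=
    fun i => V i.1 with hW
  have hOrthW : OrthogonalFamily ℝ (fun i => W i) (fun i => (W i).subtypeₗᵢ) :=
    hOrth.comp Subtype.coe_injective
  have hWtop : ⨆ i, W i = ⊤ := by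
    apply top_unique
    rw [← htop]
    refine iSup_le fun μ => ?_
    by_cases h : V μ = ⊥
    · rw [h]; exact bot_le
    · exact le_iSup_of_le (⟨μ, h⟩ : {μ : ℝ × ℝ // V μ ≠ ⊥}) le_rfl
  have hIntW : DirectSum.IsInternal W := by
    rw [hOrthW.isInternal_iff]
    rw [hWtop, Submodule.top_orthogonal_eq_bot]
  set b0 := hIntW.collectedOrthonormalBasis hOrthW
    (fun i => stdOrthonormalBasis ℝ (W i)) with hb0
  have hcard : Fintype.card (Σ i, Fin (Module.finrank ℝ (W i))) = k := by
    rw [← Module.finrank_eq_card_basis b0.toBasis]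
    exact finrank_euclideanSpace_fin
  set e := Fintype.equivFinOfCardEq hcard with he
  set b := b0.reindex e with hb
  have hbmem : ∀ i : Fin k, ∃ μ : ℝ × ℝ, b i ∈ V μ := by
    intro i
    refine ⟨(e.symm i).1.1, ?_⟩
    have := hIntW.collectedOrthonormalBasis_mem hOrthW
      (fun i => stdOrthonormalBasis ℝ (W i)) (e.symm i)
    rw [hb, OrthonormalBasis.coe_reindex]
    exact this
  -- the candidate vectors
  set v : Fin k → Fin k → ℂ := fun i l => ((b i : EuclideanSpace ℝ (Fin k)) l : ℂ) with hv
  have hbinner : ∀ i j : Fin k, (∑ l, b i l * b j l) = if i = j then (1:ℝ) else 0 := by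
    intro i j
    have hON := b.orthonormal
    rw [orthonormal_iff_ite] at hON
    have := hON i j
    rw [PiLp.inner_apply] at this
    simp [RCLike.inner_apply] at this
    rw [← this]; exact Finset.sum_congr rfl fun l _ => mul_comm _ _
  refine ⟨v, ?_, ?_, ?_, ?_⟩
  · -- span
    rw [eq_top_iff]
    intro x _
    have hreal : ∀ y : EuclideanSpace ℝ (Fin k),
        (fun l => ((y l : ℝ) : ℂ)) ∈ (Submodule.span ℂ (Set.range v)).restrictScalars ℝ := by
      intro y
      have hy : y ∈ Submodule.span ℝ (Set.range ⇑b) := by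
        rw [← b.coe_toBasis, b.toBasis.span_eq]; trivial
      induction hy using Submodule.span_induction with
      | mem z hz =>
        obtain ⟨i, rfl⟩ := hz
        exact Submodule.subset_span ⟨i, rfl⟩
      | zero =>
        have h0 : (fun l : Fin k => (((0 : EuclideanSpace ℝ (Fin k)) l : ℝ) : ℂ)) = 0 := by
          funext l; simp
        rw [h0]
        exact zero_mem _
      | add z w _ _ hz hw =>
        have : (fun l => ((z l + w l : ℝ) : ℂ)) =
            (fun l => ((z l : ℝ) : ℂ)) + fun l => ((w l : ℝ) : ℂ) := by
          funext l; push_cast; rfl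
        simpa [PiLp.add_apply, Pi.add_def] using Submodule.add_mem _ hz hw
      | smul r z _ hz =>
        have : (fun l => ((r • z) l : ℂ)) = (r : ℂ) • fun l => ((z l : ℝ) : ℂ) := by
          funext l
          simp [PiLp.smul_apply, smul_eq_mul]
        rw [Submodule.restrictScalars_mem] at hz ⊢
        rw [this]
        exact Submodule.smul_mem _ _ hz
    have h1 := hreal (WithLp.toLp 2 (fun l => (x l).re))
    have h2 := hreal (WithLp.toLp 2 (fun l => (x l).im))
    rw [Submodule.restrictScalars_mem] at h1 h2
    have : x = (fun l => (((x l).re : ℝ) : ℂ)) + Complex.I • fun l => (((x l).im : ℝ) : ℂ) := by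
      funext l
      simp [Pi.add_apply, Pi.smul_apply, smul_eq_mul]
      rw [mul_comm, Complex.re_add_im]
    rw [this]
    exact Submodule.add_mem _ h1 (Submodule.smul_mem _ _ h2)
  · -- orthonormality
    intro i j
    have : ∑ l, (starRingEnd ℂ) (v i l) * v j l = ((∑ l, b i l * b j l : ℝ) : ℂ) := by
      push_cast
      exact Finset.sum_congr rfl fun l _ => by rw [hv, Complex.conj_ofReal]
    rw [this, hbinner i j]
    split <;> simp
  · -- eigenvectors
    intro i
    obtain ⟨μ, hμ⟩ := hbmem i
    simp only [hV, Submodule.mem_inf] at hμ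
    obtain ⟨hx, hy⟩ := hμ
    rw [mem_eigenspace_iff] at hx hy
    refine ⟨(μ.2 : ℂ) + (μ.1 : ℂ) * Complex.I, ?_⟩
    have hXapp : ∀ jj, (∑ l, M jj l * b i l) = μ.2 * b i jj := by
      intro jj
      have h1 := congrFun (congrArg (WithLp.equiv 2 (Fin k → ℝ)) hx) jj
      simpa [X, Matrix.ofLp_toEuclideanLin_apply, Matrix.mulVec, dotProduct,
        PiLp.smul_apply, smul_eq_mul] using h1
    have hYapp : ∀ jj, (∑ l, N jj l * b i l) = μ.1 * b i jj := by
      intro jj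
      have h1 := congrFun (congrArg (WithLp.equiv 2 (Fin k → ℝ)) hy) jj
      simpa [Y, Matrix.ofLp_toEuclideanLin_apply, Matrix.mulVec, dotProduct,
        PiLp.smul_apply, smul_eq_mul] using h1
    funext jj
    have hAsplit : ∀ l, A jj l = ((M jj l : ℝ) : ℂ) + ((N jj l : ℝ) : ℂ) * Complex.I := by
      intro l
      rw [hM, hN]
      simp [Matrix.map_apply, Complex.re_add_im]
    calc A.mulVec (v i) jj = ∑ l, A jj l * v i l := by
          rw [Matrix.mulVec, dotProduct]
      _ = (∑ l, ((M jj l : ℝ) : ℂ) * v i l) + (∑ l, ((N jj l : ℝ) : ℂ) * v i l) * Complex.I := by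
          rw [Finset.sum_mul, ← Finset.sum_add_distrib]
          exact Finset.sum_congr rfl fun l _ => by rw [hAsplit l]; ring
      _ = ((∑ l, M jj l * b i l : ℝ) : ℂ) + ((∑ l, N jj l * b i l : ℝ) : ℂ) * Complex.I := by
          push_cast; rfl
      _ = ((μ.2 * b i jj : ℝ) : ℂ) + ((μ.1 * b i jj : ℝ) : ℂ) * Complex.I := by
          rw [hXapp jj, hYapp jj]
      _ = ((μ.2 : ℂ) + (μ.1 : ℂ) * Complex.I) • v i jj := by
          push_cast
          simp [hv, smul_eq_mul]
          ring
  · intro i l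
    simp [hv]
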